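/- For every complex sequence (u_n)_{n≥0} with u_0 = 0, one has the discrete Hardy inequality: ∑_{n=1}^∞ |u_n|²/(4n²) ≤ ∑_{n=1}^∞ |u_n − u_{n−1}|² (where the left-hand side is +∞ only if the right-hand side is). -/

import Mathlib

noncomputable def hardyW (n : ℕ) : ℝ := Real.sqrt (n + 1) - Real.sqrt n

noncomputable def hardyQ (n : ℕ) : ℝ := Real.sqrt (n + 1) / (4 * ((n : ℝ) + 1) ^ 2)

lemma hardyW_pos (n : ℕ) : 0 < hardyW n := by
  have : Real.sqrt n < Real.sqrt (n + 1) := by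
    apply Real.sqrt_lt_sqrt (Nat.cast_nonneg n); linarith
  simpa [hardyW, sub_pos] using this

lemma hardyQ_nonneg (n : ℕ) : 0 ≤ hardyQ n := by
  apply div_nonneg (Real.sqrt_nonneg _); positivity

lemma hardy_key (a b c : ℝ) (ha : 0 ≤ a) (hb : 1 ≤ b) (hc : 0 ≤ c)
    (ea : a ^ 2 = b ^ 2 - 1) (ec : c ^ 2 = b ^ 2 + 1) : 1 ≤ 4 * b ^ 3 * (2 * b - a - c) := by
  have hb0 : (0:ℝ) < b := lt_of_lt_of_le one_pos hb
  have hac : (a * c) ^ 2 = b ^ 4 - 1 := by rw [mul_pow, ea, ec]; ring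
  have h3 : 2 * b ^ 2 * (a * c) ≤ 2 * b ^ 4 - 1 := by
    nlinarith [mul_nonneg ha hc, mul_nonneg (mul_nonneg ha hc) (sq_nonneg b), sq_nonneg b]
  have hs2 : b ^ 2 * (a + c) ^ 2 ≤ 4 * b ^ 4 - 1 := by nlinarith
  have hs : a + c ≤ 2 * b := by
    nlinarith [sq_nonneg (a + c - 2 * b), sq_nonneg (a + c + 2 * b)]
  nlinarith [mul_nonneg (mul_nonneg hb0.le hb0.le) (sub_nonneg.2 hs), mul_nonneg ha hc]

lemma hardyQ_le (n : ℕ) : hardyQ n ≤ hardyW n - hardyW (n + 1) := by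
  set a := Real.sqrt n with hadef
  set b := Real.sqrt (n + 1) with hbdef
  set c := Real.sqrt ((n : ℝ) + 2) with hcdef
  have ha : 0 ≤ a := Real.sqrt_nonneg _
  have hc : 0 ≤ c := Real.sqrt_nonneg _
  have hb1 : (1:ℝ) ≤ b := by
    have h := Real.sqrt_le_sqrt (show (1:ℝ) ≤ (n:ℝ) + 1 by
      linarith [Nat.cast_nonneg (α := ℝ) n])
    rw [hbdef]; simpa using h
  have hb0 : (0:ℝ) < b := lt_of_lt_of_le one_pos hb1
  have ea : a ^ 2 = b ^ 2 - 1 := by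
    rw [hadef, hbdef, Real.sq_sqrt (Nat.cast_nonneg n),
      Real.sq_sqrt (by positivity : (0:ℝ) ≤ (n:ℝ) + 1)]; ring
  have ec : c ^ 2 = b ^ 2 + 1 := by
    rw [hcdef, hbdef, Real.sq_sqrt (by positivity : (0:ℝ) ≤ (n:ℝ) + 2),
      Real.sq_sqrt (by positivity : (0:ℝ) ≤ (n:ℝ) + 1)]; ring
  have key := hardy_key a b c ha hb1 hc ea ec
  have hW : hardyW n - hardyW (n + 1) = 2 * b - a - c := by
    simp only [hardyW, hadef, hbdef, hcdef]
    push_cast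
    ring
  have hQ : hardyQ n = b / (4 * b ^ 4) := by
    have : ((n : ℝ) + 1) ^ 2 = b ^ 4 := by
      rw [hbdef, show b ^ 4 = (b ^ 2) ^ 2 by ring, Real.sq_sqrt (by positivity : (0:ℝ) ≤ (n:ℝ) + 1)]
    simp only [hardyQ, hbdef, this]
  rw [hW, hQ, div_le_iff₀ (by positivity)]
  nlinarith [key, hb0]

lemma hardy_tele (k N : ℕ) : ∑ n ∈ Finset.Ico k (k + N), hardyQ n ≤ hardyW k := by
  have main : ∑ n ∈ Finset.Ico k (k + N), hardyQ n ≤ hardyW k - hardyW (k + N) := by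
    induction N with
    | zero => simp
    | succ m ih =>
        rw [show k + (m + 1) = (k + m) + 1 by ring,
          Finset.sum_Ico_succ_top (Nat.le_add_right k m)]
        have := hardyQ_le (k + m)
        calc ∑ n ∈ Finset.Ico k (k + m), hardyQ n + hardyQ (k + m)
            ≤ (hardyW k - hardyW (k + m)) + (hardyW (k + m) - hardyW (k + m + 1)) :=
              add_le_add ih this
          _ = hardyW k - hardyW (k + m + 1) := by ring
  linarith [main, (hardyW_pos (k + N)).le]

lemma hardy_tail (k : ℕ) :
    ∑' n : ℕ, (if k ≤ n then ENNReal.ofReal (hardyQ n) else 0) ≤ ENNReal.ofReal (hardyW k) := by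
  rw [ENNReal.tsum_eq_iSup_sum]
  apply iSup_le
  intro s
  set N := s.sup id + 1 with hN
  have hsub : s.filter (fun n => k ≤ n) ⊆ Finset.Ico k (k + N) := by
    intro n hn
    simp only [Finset.mem_filter] at hn
    rw [Finset.mem_Ico]
    refine ⟨hn.2, ?_⟩
    have : n ≤ s.sup id := Finset.le_sup (f := id) hn.1
    omega
  calc ∑ n ∈ s, (if k ≤ n then ENNReal.ofReal (hardyQ n) else 0)
      = ∑ n ∈ s.filter (fun n => k ≤ n), ENNReal.ofReal (hardyQ n) :=
        (Finset.sum_filter _ _).symm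
    _ ≤ ∑ n ∈ Finset.Ico k (k + N), ENNReal.ofReal (hardyQ n) :=
        Finset.sum_le_sum_of_subset hsub
    _ = ENNReal.ofReal (∑ n ∈ Finset.Ico k (k + N), hardyQ n) :=
        (ENNReal.ofReal_sum_of_nonneg fun n _ => hardyQ_nonneg n).symm
    _ ≤ ENNReal.ofReal (hardyW k) := ENNReal.ofReal_le_ofReal (hardy_tele k N)

/-- The classical discrete Hardy inequality: for every complex sequence `u` with `u 0 = 0`,
`∑_{n≥1} |u n|² / (4 n²) ≤ ∑_{n≥1} |u n - u (n-1)|²`, as an inequality in `[0, ∞]`. -/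
theorem discrete_hardy_inequality (u : ℕ → ℂ) (h0 : u 0 = 0) :
    ∑' n : ℕ, ENNReal.ofReal (‖u (n + 1)‖ ^ 2 / (4 * ((n : ℝ) + 1) ^ 2)) ≤
      ∑' n : ℕ, ENNReal.ofReal (‖u (n + 1) - u n‖ ^ 2) := by
  set bb : ℕ → ℝ := fun k => ‖u (k + 1) - u k‖ with hbb
  set r : ℕ → ℝ := fun k => bb k ^ 2 / hardyW k with hr
  have hr_nonneg : ∀ k, 0 ≤ r k := fun k => div_nonneg (sq_nonneg _) (hardyW_pos k).le
  -- pointwise bound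
  have hP : ∀ n : ℕ, ‖u (n + 1)‖ ^ 2 / (4 * ((n : ℝ) + 1) ^ 2) ≤
      hardyQ n * ∑ k ∈ Finset.range (n + 1), r k := by
    intro n
    have hsqrt_pos : (0:ℝ) < Real.sqrt (n + 1) := Real.sqrt_pos.2 (by positivity)
    have h1 : ‖u (n + 1)‖ ≤ ∑ k ∈ Finset.range (n + 1), bb k := by
      have htel : (∑ k ∈ Finset.range (n + 1), (u (k + 1) - u k)) = u (n + 1) := by
        rw [Finset.sum_range_sub u, h0, sub_zero]
      calc ‖u (n + 1)‖
          = ‖∑ k ∈ Finset.range (n + 1), (u (k + 1) - u k)‖ := by rw [htel]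
        _ ≤ ∑ k ∈ Finset.range (n + 1), bb k := norm_sum_le _ _
    have hsumW : ∑ k ∈ Finset.range (n + 1), hardyW k = Real.sqrt (n + 1) := by
      have := Finset.sum_range_sub (fun k : ℕ => Real.sqrt k) (n + 1)
      have heq : ∀ k : ℕ, hardyW k = Real.sqrt ((k : ℕ) + 1 : ℕ) - Real.sqrt k := by
        intro k; simp [hardyW]
      calc ∑ k ∈ Finset.range (n + 1), hardyW k
          = ∑ k ∈ Finset.range (n + 1), (Real.sqrt ((k + 1 : ℕ)) - Real.sqrt k) := by
            apply Finset.sum_congr rfl; intro k _; exact heq k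
        _ = Real.sqrt ((n + 1 : ℕ)) - Real.sqrt (0 : ℕ) := this
        _ = Real.sqrt (n + 1) := by push_cast; simp
    have h2 : (∑ k ∈ Finset.range (n + 1), bb k) ^ 2 / Real.sqrt (n + 1) ≤
        ∑ k ∈ Finset.range (n + 1), r k := by
      have := Finset.sq_sum_div_le_sum_sq_div (Finset.range (n + 1)) bb
        (g := hardyW) (fun i _ => hardyW_pos i)
      rwa [hsumW] at this
    have h2' : (∑ k ∈ Finset.range (n + 1), bb k) ^ 2 ≤
        Real.sqrt (n + 1) * ∑ k ∈ Finset.range (n + 1), r k := by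
      rw [div_le_iff₀ hsqrt_pos] at h2; linarith [h2]
    have h1' : ‖u (n + 1)‖ ^ 2 ≤ (∑ k ∈ Finset.range (n + 1), bb k) ^ 2 :=
      pow_le_pow_left₀ (norm_nonneg _) h1 2
    have hden : (0:ℝ) < 4 * ((n : ℝ) + 1) ^ 2 := by positivity
    rw [div_le_iff₀ hden]
    calc ‖u (n + 1)‖ ^ 2
        ≤ Real.sqrt (n + 1) * ∑ k ∈ Finset.range (n + 1), r k := le_trans h1' h2'
      _ = (hardyQ n * ∑ k ∈ Finset.range (n + 1), r k) * (4 * ((n : ℝ) + 1) ^ 2) := by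
          rw [hardyQ]; field_simp
  -- ENNReal chain
  set F : ℕ → ℕ → ENNReal := fun n k =>
    if k ≤ n then ENNReal.ofReal (hardyQ n * r k) else 0 with hF
  calc ∑' n : ℕ, ENNReal.ofReal (‖u (n + 1)‖ ^ 2 / (4 * ((n : ℝ) + 1) ^ 2))
      ≤ ∑' n : ℕ, ENNReal.ofReal (hardyQ n * ∑ k ∈ Finset.range (n + 1), r k) :=
        ENNReal.tsum_le_tsum fun n => ENNReal.ofReal_le_ofReal (hP n)
    _ = ∑' n : ℕ, ∑' k : ℕ, F n k := by
        apply tsum_congr; intro n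
        rw [Finset.mul_sum, ENNReal.ofReal_sum_of_nonneg
          (fun k _ => mul_nonneg (hardyQ_nonneg n) (hr_nonneg k))]
        rw [tsum_eq_sum (s := Finset.range (n + 1))
          (by intro k hk; simp only [Finset.mem_range, not_lt] at hk
              simp only [hF]; rw [if_neg]; omega)]
        apply Finset.sum_congr rfl
        intro k hk
        simp only [Finset.mem_range] at hk
        simp only [hF]; rw [if_pos (by omega)]
    _ = ∑' k : ℕ, ∑' n : ℕ, F n k := ENNReal.tsum_comm
    _ ≤ ∑' k : ℕ, ENNReal.ofReal (bb k ^ 2) := by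
        apply ENNReal.tsum_le_tsum
        intro k
        have hper : ∀ n : ℕ, F n k =
            (if k ≤ n then ENNReal.ofReal (hardyQ n) else 0) * ENNReal.ofReal (r k) := by
          intro n
          simp only [hF]
          by_cases h : k ≤ n
          · rw [if_pos h, if_pos h, ENNReal.ofReal_mul (hardyQ_nonneg n)]
          · rw [if_neg h, if_neg h, zero_mul]
        calc ∑' n : ℕ, F n k
            = (∑' n : ℕ, (if k ≤ n then ENNReal.ofReal (hardyQ n) else 0)) *
                ENNReal.ofReal (r k) := by rw [← ENNReal.tsum_mul_right]; exact tsum_congr hper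
          _ ≤ ENNReal.ofReal (hardyW k) * ENNReal.ofReal (r k) :=
              mul_le_mul_left (hardy_tail k) _
          _ = ENNReal.ofReal (hardyW k * r k) :=
              (ENNReal.ofReal_mul (hardyW_pos k).le).symm
          _ = ENNReal.ofReal (bb k ^ 2) := by
              rw [hr]; congr 1
              rw [mul_comm, div_mul_cancel₀ _ (hardyW_pos k).ne']
    _ = ∑' n : ℕ, ENNReal.ofReal (‖u (n + 1) - u n‖ ^ 2) := rfl
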